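/- Let G be a group with finite symmetric generating set S, 1 ≤ p < ∞, and suppose there exists a sequence α_n ∈ ℓ^p(G) with ‖α_n‖_{D(p)} → 0 (where ‖α‖_{D(p)}^p = Σ_{g∈S} ‖α ∗ (g-1)‖_p^p) such that for some x₀ ∈ G the values α_n(x₀) do not converge to 0. Then the first reduced ℓ^p-cohomology of G vanishes: every α ∈ D^p(G) lies in the closure of ℓ^p(G) ⊕ ℂ in D^p(G). -/

import Mathlib

open scoped BigOperators

open Filter

namespace RLPCV

/-- clamp a real number to `[-M, M]`. -/
noncomputable def clampR (M t : ℝ) : ℝ := max (-M) (min M t)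

lemma clampR_lip (M a b : ℝ) : |clampR M a - clampR M b| ≤ |a - b| := by
  unfold clampR
  calc |max (-M) (min M a) - max (-M) (min M b)|
      = |max (min M a) (-M) - max (min M b) (-M)| := by rw [max_comm (-M), max_comm (-M)]
    _ ≤ |min M a - min M b| := abs_max_sub_max_le_abs _ _ _
    _ ≤ max |M - M| |a - b| := abs_min_sub_min_le_max _ _ _ _
    _ = |a - b| := by simp

lemma clampR_zero {M : ℝ} (hM : 0 ≤ M) : clampR M 0 = 0 := by
  unfold clampR
  rw [min_eq_right hM, max_eq_right (neg_nonpos.mpr hM)]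

lemma abs_clampR_le {M : ℝ} (hM : 0 ≤ M) (t : ℝ) : |clampR M t| ≤ |t| := by
  have := clampR_lip M t 0
  simpa [clampR_zero hM] using this

lemma abs_clampR_le' (M t : ℝ) : |clampR M t| ≤ M ⊔ |M| := by
  unfold clampR
  rw [abs_le]
  constructor
  · calc -(M ⊔ |M|) ≤ -|M| := by simp
      _ ≤ -M := neg_le_neg (le_abs_self M)
      _ ≤ _ := le_max_left _ _
  · refine max_le ?_ ?_
    · calc -M ≤ |M| := neg_le_abs M
        _ ≤ M ⊔ |M| := le_max_right _ _
    · exact le_trans (min_le_left _ _) (le_max_left _ _)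

lemma abs_clampR_le'' {M : ℝ} (hM : 0 ≤ M) (t : ℝ) : |clampR M t| ≤ M := by
  have := abs_clampR_le' M t
  rwa [abs_of_nonneg hM, max_self] at this

lemma clampR_eq {M t : ℝ} (h : |t| ≤ M) : clampR M t = t := by
  unfold clampR
  rw [abs_le] at h
  rw [min_eq_right h.2, max_eq_right h.1]

/-- truncation on ℂ (coordinatewise clamp). -/
noncomputable def truncC (M : ℝ) (z : ℂ) : ℂ := ⟨clampR M z.re, clampR M z.im⟩

@[simp] lemma truncC_re (M : ℝ) (z : ℂ) : (truncC M z).re = clampR M z.re := rfl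
@[simp] lemma truncC_im (M : ℝ) (z : ℂ) : (truncC M z).im = clampR M z.im := rfl

lemma norm_le_of_coords {u v : ℂ} (h1 : |u.re| ≤ |v.re|) (h2 : |u.im| ≤ |v.im|) :
    ‖u‖ ≤ ‖v‖ := by
  rw [Complex.norm_def, Complex.norm_def]
  apply Real.sqrt_le_sqrt
  rw [Complex.normSq_apply, Complex.normSq_apply]
  have h1' : u.re * u.re ≤ v.re * v.re := by
    have := mul_le_mul h1 h1 (abs_nonneg _) (abs_nonneg _)
    simpa [abs_mul_abs_self] using this
  have h2' : u.im * u.im ≤ v.im * v.im := by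
    have := mul_le_mul h2 h2 (abs_nonneg _) (abs_nonneg _)
    simpa [abs_mul_abs_self] using this
  linarith

lemma truncC_lip (M : ℝ) (u v : ℂ) : ‖truncC M u - truncC M v‖ ≤ ‖u - v‖ := by
  apply norm_le_of_coords
  · simpa using clampR_lip M u.re v.re
  · simpa using clampR_lip M u.im v.im

lemma norm_truncC_le {M : ℝ} (hM : 0 ≤ M) (z : ℂ) : ‖truncC M z‖ ≤ ‖z‖ := by
  apply norm_le_of_coords
  · simpa using abs_clampR_le hM z.re
  · simpa using abs_clampR_le hM z.im

lemma norm_truncC_le' {M : ℝ} (hM : 0 ≤ M) (z : ℂ) : ‖truncC M z‖ ≤ 2 * M := by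
  calc ‖truncC M z‖ ≤ |(truncC M z).re| + |(truncC M z).im| :=
        Complex.norm_le_abs_re_add_abs_im _
    _ ≤ M + M := add_le_add (abs_clampR_le'' hM _) (abs_clampR_le'' hM _)
    _ = 2 * M := by ring

lemma truncC_eq {M : ℝ} {z : ℂ} (h1 : |z.re| ≤ M) (h2 : |z.im| ≤ M) : truncC M z = z := by
  apply Complex.ext <;> simp [clampR_eq, h1, h2]

lemma truncC_one : truncC 1 1 = 1 := by
  apply truncC_eq <;> simp

lemma lipschitzWith_truncC (M : ℝ) : LipschitzWith 1 (truncC M) := by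
  apply LipschitzWith.of_dist_le_mul
  intro x y
  simpa [dist_eq_norm] using truncC_lip M x y

lemma rpow_le2 {p a b c : ℝ} (hp : 1 ≤ p) (ha : 0 ≤ a) (hb : 0 ≤ b) (hc : 0 ≤ c)
    (h : a ≤ b + c) : a ^ p ≤ 2 ^ p * (b ^ p + c ^ p) := by
  have hp0 : (0:ℝ) ≤ p := le_trans zero_le_one hp
  set m := max b c with hm
  have hmnn : 0 ≤ m := le_trans hb (le_max_left _ _)
  have h2 : a ≤ 2 * m := by
    have := max_le_iff (a := b) (b := c) (c := m)
    have hb' : b ≤ m := le_max_left _ _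
    have hc' : c ≤ m := le_max_right _ _
    linarith
  calc a ^ p ≤ (2 * m) ^ p := Real.rpow_le_rpow ha h2 hp0
    _ = 2 ^ p * m ^ p := Real.mul_rpow (by norm_num) hmnn
    _ ≤ 2 ^ p * (b ^ p + c ^ p) := by
        apply mul_le_mul_of_nonneg_left _ (Real.rpow_nonneg (by norm_num) _)
        rcases max_cases b c with ⟨he, _⟩ | ⟨he, _⟩
        · rw [← hm] at *
          rw [he]
          have := Real.rpow_nonneg hc p
          linarith
        · rw [← hm] at *
          rw [he]
          have := Real.rpow_nonneg hb p
          linarith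

lemma rpow_le3 {p a b c d : ℝ} (hp : 1 ≤ p) (ha : 0 ≤ a) (hb : 0 ≤ b) (hc : 0 ≤ c)
    (hd : 0 ≤ d) (h : a ≤ b + c + d) : a ^ p ≤ 3 ^ p * (b ^ p + c ^ p + d ^ p) := by
  have hp0 : (0:ℝ) ≤ p := le_trans zero_le_one hp
  set m := max b (max c d) with hm
  have hb' : b ≤ m := le_max_left _ _
  have hc' : c ≤ m := le_trans (le_max_left _ _) (le_max_right _ _)
  have hd' : d ≤ m := le_trans (le_max_right _ _) (le_max_right _ _)
  have hmnn : 0 ≤ m := le_trans hb hb'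
  have h3 : a ≤ 3 * m := by linarith
  have hmp : m ^ p ≤ b ^ p + c ^ p + d ^ p := by
    have hbp := Real.rpow_nonneg hb p
    have hcp := Real.rpow_nonneg hc p
    have hdp := Real.rpow_nonneg hd p
    rcases max_cases b (max c d) with ⟨he, _⟩ | ⟨he, _⟩
    · rw [← hm] at he; rw [he]; linarith
    · rw [← hm] at he
      rcases max_cases c d with ⟨he2, _⟩ | ⟨he2, _⟩
      · rw [he, he2]; linarith
      · rw [he, he2]; linarith
  calc a ^ p ≤ (3 * m) ^ p := Real.rpow_le_rpow ha h3 hp0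
    _ = 3 ^ p * m ^ p := Real.mul_rpow (by norm_num) hmnn
    _ ≤ _ := mul_le_mul_of_nonneg_left hmp (Real.rpow_nonneg (by norm_num) _)

lemma tendsto_of_norm_rpow {p : ℝ} (hp0 : 0 < p) {f : ℕ → ℂ}
    (h : Tendsto (fun n => ‖f n‖ ^ p) atTop (nhds 0)) :
    Tendsto f atTop (nhds 0) := by
  rw [tendsto_zero_iff_norm_tendsto_zero]
  have h2 := h.rpow_const (p := p⁻¹) (Or.inr (by positivity))
  rw [Real.zero_rpow (by positivity)] at h2
  refine h2.congr fun n => ?_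
  exact Real.rpow_rpow_inv (norm_nonneg _) hp0.ne'

lemma summable_diff {G : Type*} [Group G] {f : G → ℂ} {p : ℝ} (hp : 1 ≤ p)
    (hf : Summable fun x => ‖f x‖ ^ p) (g : G) :
    Summable fun x => ‖f (x * g⁻¹) - f x‖ ^ p := by
  have h1 : Summable fun x => ‖f (x * g⁻¹)‖ ^ p :=
    ((Equiv.mulRight g⁻¹).summable_iff (f := fun x => ‖f x‖ ^ p)).mpr hf
  refine Summable.of_nonneg_of_le (fun x => Real.rpow_nonneg (norm_nonneg _) _)
    (fun x => ?_) (((h1.add hf)).mul_left (2 ^ p))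
  exact rpow_le2 hp (norm_nonneg _) (norm_nonneg _) (norm_nonneg _) (norm_sub_le _ _)

end RLPCV

open RLPCV

/-- Sufficient condition for vanishing of the first reduced `ℓ^p`-cohomology:
if there is a sequence `α_n ∈ ℓ^p(G)` with `‖α_n‖_{D(p)} → 0` whose values at
some point `x₀` do not tend to `0`, then every `α ∈ D^p(G)` lies in the closure
of `ℓ^p(G) ⊕ ℂ` in the `D^p(G)` norm. -/
theorem reduced_lp_cohomology_vanishes {G : Type*} [Group G] (S : Finset G)
    (hsym : ∀ g ∈ S, g⁻¹ ∈ S) (hgen : Subgroup.closure (S : Set G) = ⊤)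
    (p : ℝ) (hp : 1 ≤ p)
    (a : ℕ → G → ℂ)
    (halp : ∀ n, Summable (fun x : G => ‖a n x‖ ^ p))
    (hanorm : Filter.Tendsto
      (fun n => (∑ g ∈ S, ∑' x : G, ‖a n (x * g⁻¹) - a n x‖ ^ p) ^ (1 / p))
      Filter.atTop (nhds 0))
    (x₀ : G)
    (hx₀ : ¬ Filter.Tendsto (fun n => a n x₀) Filter.atTop (nhds 0)) :
    ∀ α : G → ℂ, (∀ g ∈ S, Summable (fun x : G => ‖α (x * g⁻¹) - α x‖ ^ p)) →
      ∀ ε : ℝ, 0 < ε → ∃ (β : G → ℂ) (c : ℂ),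
        Summable (fun x : G => ‖β x‖ ^ p) ∧
        ((∑ g ∈ S, ∑' x : G,
            ‖((α (x * g⁻¹) - β (x * g⁻¹) - c)) - ((α x - β x - c))‖ ^ p) +
          ‖α 1 - β 1 - c‖ ^ p) ^ (1 / p) < ε := by
  have hp0 : (0:ℝ) < p := lt_of_lt_of_le one_pos hp
  set Da : ℕ → ℝ := fun n => ∑ g ∈ S, ∑' x : G, ‖a n (x * g⁻¹) - a n x‖ ^ p with hDadef
  have hDa_nonneg : ∀ n, 0 ≤ Da n := fun n =>
    Finset.sum_nonneg fun g _ => tsum_nonneg fun x => Real.rpow_nonneg (norm_nonneg _) _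
  have hDa : Tendsto Da atTop (nhds 0) := by
    have h2 := hanorm.rpow_const (p := p) (Or.inr hp0.le)
    rw [Real.zero_rpow hp0.ne'] at h2
    refine h2.congr fun n => ?_
    rw [one_div]
    exact Real.rpow_inv_rpow (hDa_nonneg n) hp0.ne'
  have hfreq : ∃ δ > (0:ℝ), ∃ᶠ n in atTop, δ ≤ ‖a n x₀‖ := by
    by_contra h
    push_neg at h
    apply hx₀
    rw [NormedAddCommGroup.tendsto_nhds_zero]
    intro δ hδ
    have h3 := h δ hδ
    filter_upwards [h3] with n hn
    exact hn
  obtain ⟨δ, hδ, hfr⟩ := hfreq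
  obtain ⟨φ, hφmono, hφ⟩ := extraction_of_frequently_atTop hfr
  have hane : ∀ n, a (φ n) x₀ ≠ 0 := by
    intro n h0
    have := hφ n
    rw [h0, norm_zero] at this
    linarith
  set b : ℕ → G → ℂ := fun n x => (a (φ n) x₀)⁻¹ * a (φ n) x with hbdef
  have hbx₀ : ∀ n, b n x₀ = 1 := fun n => inv_mul_cancel₀ (hane n)
  have hbsum : ∀ n, Summable fun x => ‖b n x‖ ^ p := by
    intro n
    refine ((halp (φ n)).mul_left (‖(a (φ n) x₀)⁻¹‖ ^ p)).congr fun x => ?_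
    rw [hbdef]
    simp only [norm_mul]
    rw [Real.mul_rpow (norm_nonneg _) (norm_nonneg _)]
  have hbdiff : ∀ (n : ℕ) (g : G), Summable fun x => ‖b n (x * g⁻¹) - b n x‖ ^ p :=
    fun n g => summable_diff hp (hbsum n) g
  have hadiff : ∀ (n : ℕ) (g : G), Summable fun x => ‖a n (x * g⁻¹) - a n x‖ ^ p :=
    fun n g => summable_diff hp (halp n) g
  set Db : ℕ → ℝ := fun n => ∑ g ∈ S, ∑' x : G, ‖b n (x * g⁻¹) - b n x‖ ^ p with hDbdef
  have hDb_nonneg : ∀ n, 0 ≤ Db n := fun n =>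
    Finset.sum_nonneg fun g _ => tsum_nonneg fun x => Real.rpow_nonneg (norm_nonneg _) _
  have hDb : Tendsto Db atTop (nhds 0) := by
    have hbound : ∀ n, Db n ≤ (δ ^ p)⁻¹ * Da (φ n) := by
      intro n
      rw [hDbdef, hDadef, Finset.mul_sum]
      apply Finset.sum_le_sum
      intro g _
      rw [← tsum_mul_left]
      refine Summable.tsum_le_tsum (fun x => ?_) (hbdiff n g) ((hadiff (φ n) g).mul_left _)
      have he : b n (x * g⁻¹) - b n x = (a (φ n) x₀)⁻¹ * (a (φ n) (x * g⁻¹) - a (φ n) x) := by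
        rw [hbdef]; ring
      rw [he, norm_mul, Real.mul_rpow (norm_nonneg _) (norm_nonneg _)]
      apply mul_le_mul_of_nonneg_right _ (Real.rpow_nonneg (norm_nonneg _) _)
      rw [norm_inv]
      calc ‖a (φ n) x₀‖⁻¹ ^ p ≤ (δ⁻¹) ^ p :=
            Real.rpow_le_rpow (by positivity) (inv_anti₀ hδ (hφ n)) hp0.le
        _ = (δ ^ p)⁻¹ := Real.inv_rpow hδ.le p
    exact squeeze_zero hDb_nonneg hbound
      (by simpa using ((hDa.comp hφmono.tendsto_atTop).const_mul ((δ ^ p)⁻¹)))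
  have keyS : ∀ g ∈ S, ∀ x : G, Tendsto (fun n => b n (x * g) - b n x) atTop (nhds 0) := by
    intro g hg x
    have hnr : Tendsto (fun n => ‖b n (x * g) - b n x‖ ^ p) atTop (nhds 0) := by
      apply squeeze_zero (fun n => Real.rpow_nonneg (norm_nonneg _) _) _ hDb
      intro n
      have h1 : ‖b n (x * g) - b n x‖ ^ p = ‖b n (x * (g⁻¹)⁻¹) - b n x‖ ^ p := by rw [inv_inv]
      rw [h1]
      calc ‖b n (x * (g⁻¹)⁻¹) - b n x‖ ^ p
          ≤ ∑' y : G, ‖b n (y * (g⁻¹)⁻¹) - b n y‖ ^ p :=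
            Summable.le_tsum (hbdiff n g⁻¹) x fun y _ => Real.rpow_nonneg (norm_nonneg _) _
        _ ≤ Db n := Finset.single_le_sum
            (f := fun h => ∑' y : G, ‖b n (y * h⁻¹) - b n y‖ ^ p)
            (fun h _ => tsum_nonneg fun y => Real.rpow_nonneg (norm_nonneg _) _) (hsym g hg)
    exact tendsto_of_norm_rpow hp0 hnr
  have keyAll : ∀ w x : G, Tendsto (fun n => b n (x * w) - b n x) atTop (nhds 0) := by
    intro w
    have hw : w ∈ Subgroup.closure (S : Set G) := by rw [hgen]; trivial
    refine Subgroup.closure_induction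
      (p := fun w _ => ∀ x : G, Tendsto (fun n => b n (x * w) - b n x) atTop (nhds 0))
      (fun g hg => keyS g hg) (fun x => by simpa using tendsto_const_nhds) ?_ ?_ hw
    · intro u v hu hv Hu Hv x
      have h1 := (Hv (x * u)).add (Hu x)
      have h2 : (fun n => (b n (x * u * v) - b n (x * u)) + (b n (x * u) - b n x))
          = fun n => b n (x * (u * v)) - b n x := by
        funext n; rw [mul_assoc]; ring
      rw [h2] at h1
      simpa using h1
    · intro u hu Hu x
      have h1 := (Hu (x * u⁻¹)).neg
      have h2 : (fun n => -(b n (x * u⁻¹ * u) - b n (x * u⁻¹)))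
          = fun n => b n (x * u⁻¹) - b n x := by
        funext n; rw [inv_mul_cancel_right]; ring
      rw [h2] at h1
      simpa using h1
  have hbpt : ∀ x : G, Tendsto (fun n => b n x) atTop (nhds 1) := by
    intro x
    have h1 := keyAll (x₀⁻¹ * x) x₀
    simp only [mul_inv_cancel_left, hbx₀] at h1
    have h2 := h1.add_const 1
    simpa using h2
  -- truncated b
  set tb : ℕ → G → ℂ := fun n x => truncC 1 (b n x) with htbdef
  have htbpt : ∀ x : G, Tendsto (fun n => tb n x) atTop (nhds 1) := by
    intro x
    have hc := ((lipschitzWith_truncC 1).continuous.continuousAt (x := (1:ℂ))).tendsto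
    have h2 := hc.comp (hbpt x)
    rw [truncC_one] at h2
    exact h2
  have htbnorm : ∀ n x, ‖tb n x‖ ≤ 2 := fun n x => by
    simpa using norm_truncC_le' zero_le_one (b n x)
  have htbdiffsum : ∀ (n : ℕ) (g : G), Summable fun x => ‖tb n (x * g⁻¹) - tb n x‖ ^ p := by
    intro n g
    refine Summable.of_nonneg_of_le (fun x => Real.rpow_nonneg (norm_nonneg _) _)
      (fun x => ?_) (hbdiff n g)
    exact Real.rpow_le_rpow (norm_nonneg _) (truncC_lip 1 _ _) hp0.le
  -- now fix α, ε
  intro α hα ε hε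
  have hεp : 0 < ε ^ p := Real.rpow_pos_of_pos hε p
  have h3p : (0:ℝ) < 3 ^ p := Real.rpow_pos_of_pos (by norm_num) p
  set η : ℝ := ε ^ p / (4 * 3 ^ p) with hηdef
  have hη : 0 < η := by positivity
  set T : ℕ → G → ℂ := fun M x => truncC (M : ℝ) (α x) with hTdef
  have hTlip : ∀ (M : ℕ) (x y : G), ‖T M x - T M y‖ ≤ ‖α x - α y‖ := fun M x y =>
    truncC_lip _ _ _
  have hE1 : Tendsto
      (fun M : ℕ => ∑ g ∈ S, ∑' x : G, ‖(α (x * g⁻¹) - T M (x * g⁻¹)) - (α x - T M x)‖ ^ p)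
      atTop (nhds 0) := by
    have hper : ∀ g ∈ S, Tendsto
        (fun M : ℕ => ∑' x : G, ‖(α (x * g⁻¹) - T M (x * g⁻¹)) - (α x - T M x)‖ ^ p)
        atTop (nhds 0) := by
      intro g hg
      have h0 : (0:ℝ) = ∑' _ : G, (0:ℝ) := by simp
      rw [h0]
      apply tendsto_tsum_of_dominated_convergence
        (bound := fun x => 2 ^ p * ‖α (x * g⁻¹) - α x‖ ^ p) ((hα g hg).mul_left _)
      · intro x
        have hev : ∀ᶠ M : ℕ in atTop,
            ‖(α (x * g⁻¹) - T M (x * g⁻¹)) - (α x - T M x)‖ ^ p = 0 := by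
          set C : ℝ := max (max |(α (x * g⁻¹)).re| |(α (x * g⁻¹)).im|)
            (max |(α x).re| |(α x).im|) with hCdef
          filter_upwards [eventually_ge_atTop ⌈C⌉₊] with M hM
          have hMC : C ≤ (M : ℝ) := by
            calc C ≤ (⌈C⌉₊ : ℝ) := Nat.le_ceil C
              _ ≤ (M : ℝ) := by exact_mod_cast hM
          have h1 : T M (x * g⁻¹) = α (x * g⁻¹) := truncC_eq
            (le_trans (le_trans (le_max_left _ _) (le_max_left _ _)) hMC)
            (le_trans (le_trans (le_max_right _ _) (le_max_left _ _)) hMC)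
          have h2 : T M x = α x := truncC_eq
            (le_trans (le_trans (le_max_left _ _) (le_max_right _ _)) hMC)
            (le_trans (le_trans (le_max_right _ _) (le_max_right _ _)) hMC)
          rw [h1, h2]
          simp [Real.zero_rpow hp0.ne']
        exact tendsto_const_nhds.congr' (hev.mono fun M hM => hM.symm)
      · filter_upwards with M x
        rw [Real.norm_of_nonneg (Real.rpow_nonneg (norm_nonneg _) _)]
        calc ‖(α (x * g⁻¹) - T M (x * g⁻¹)) - (α x - T M x)‖ ^ p
            ≤ (2 * ‖α (x * g⁻¹) - α x‖) ^ p := by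
              apply Real.rpow_le_rpow (norm_nonneg _) _ hp0.le
              calc ‖(α (x * g⁻¹) - T M (x * g⁻¹)) - (α x - T M x)‖
                  = ‖(α (x * g⁻¹) - α x) - (T M (x * g⁻¹) - T M x)‖ := by ring_nf
                _ ≤ ‖α (x * g⁻¹) - α x‖ + ‖T M (x * g⁻¹) - T M x‖ := norm_sub_le _ _
                _ ≤ ‖α (x * g⁻¹) - α x‖ + ‖α (x * g⁻¹) - α x‖ :=
                    add_le_add (le_refl _) (hTlip M _ _)
                _ = 2 * ‖α (x * g⁻¹) - α x‖ := by ring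
          _ = 2 ^ p * ‖α (x * g⁻¹) - α x‖ ^ p := Real.mul_rpow (by norm_num) (norm_nonneg _)
    have h2 := tendsto_finset_sum S hper
    simpa using h2
  obtain ⟨M, hME1⟩ := (hE1.eventually_lt_const hη).exists
  set Tα : G → ℂ := T M with hTαdef
  have hTαbd : ∀ x, ‖Tα x‖ ≤ 2 * M := fun x => norm_truncC_le' (Nat.cast_nonneg M) _
  have hbd1 : ∀ (g x : G),
      ‖(α (x * g⁻¹) - Tα (x * g⁻¹)) - (α x - Tα x)‖ ^ p ≤ 2 ^ p * ‖α (x * g⁻¹) - α x‖ ^ p := by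
    intro g x
    calc ‖(α (x * g⁻¹) - Tα (x * g⁻¹)) - (α x - Tα x)‖ ^ p
        ≤ (2 * ‖α (x * g⁻¹) - α x‖) ^ p := by
          apply Real.rpow_le_rpow (norm_nonneg _) _ hp0.le
          calc ‖(α (x * g⁻¹) - Tα (x * g⁻¹)) - (α x - Tα x)‖
              = ‖(α (x * g⁻¹) - α x) - (Tα (x * g⁻¹) - Tα x)‖ := by ring_nf
            _ ≤ ‖α (x * g⁻¹) - α x‖ + ‖Tα (x * g⁻¹) - Tα x‖ := norm_sub_le _ _
            _ ≤ ‖α (x * g⁻¹) - α x‖ + ‖α (x * g⁻¹) - α x‖ := add_le_add (le_refl _) (hTlip M _ _)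
            _ = 2 * ‖α (x * g⁻¹) - α x‖ := by ring
      _ = 2 ^ p * ‖α (x * g⁻¹) - α x‖ ^ p := Real.mul_rpow (by norm_num) (norm_nonneg _)
  have hbd2 : ∀ (j : ℕ) (g x : G),
      ‖(1 - tb j (x * g⁻¹)) * (Tα (x * g⁻¹) - Tα x)‖ ^ p ≤ 3 ^ p * ‖α (x * g⁻¹) - α x‖ ^ p := by
    intro j g x
    calc ‖(1 - tb j (x * g⁻¹)) * (Tα (x * g⁻¹) - Tα x)‖ ^ p
        ≤ (3 * ‖α (x * g⁻¹) - α x‖) ^ p := by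
          apply Real.rpow_le_rpow (norm_nonneg _) _ hp0.le
          rw [norm_mul]
          have hb1 : ‖(1:ℂ) - tb j (x * g⁻¹)‖ ≤ 3 := by
            calc ‖(1:ℂ) - tb j (x * g⁻¹)‖ ≤ ‖(1:ℂ)‖ + ‖tb j (x * g⁻¹)‖ := norm_sub_le _ _
              _ ≤ 1 + 2 := by
                  have := htbnorm j (x * g⁻¹)
                  simp only [norm_one]
                  linarith
              _ = 3 := by norm_num
          exact mul_le_mul hb1 (hTlip M _ _) (norm_nonneg _) (by norm_num)
      _ = 3 ^ p * ‖α (x * g⁻¹) - α x‖ ^ p := Real.mul_rpow (by norm_num) (norm_nonneg _)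
  have hbd3 : ∀ (j : ℕ) (g x : G),
      ‖Tα x * (tb j x - tb j (x * g⁻¹))‖ ^ p
        ≤ (2 * (M:ℝ)) ^ p * ‖b j (x * g⁻¹) - b j x‖ ^ p := by
    intro j g x
    calc ‖Tα x * (tb j x - tb j (x * g⁻¹))‖ ^ p
        ≤ ((2 * (M:ℝ)) * ‖b j (x * g⁻¹) - b j x‖) ^ p := by
          apply Real.rpow_le_rpow (norm_nonneg _) _ hp0.le
          rw [norm_mul]
          refine mul_le_mul (hTαbd x) ?_ (norm_nonneg _) (by positivity)
          rw [norm_sub_rev]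
          exact truncC_lip 1 _ _
      _ = (2 * (M:ℝ)) ^ p * ‖b j (x * g⁻¹) - b j x‖ ^ p :=
          Real.mul_rpow (by positivity) (norm_nonneg _)
  have hs3 : ∀ (j : ℕ) (g : G), Summable fun x : G => ‖Tα x * (tb j x - tb j (x * g⁻¹))‖ ^ p := by
    intro j g
    exact Summable.of_nonneg_of_le (fun x => Real.rpow_nonneg (norm_nonneg _) _)
      (fun x => hbd3 j g x) ((hbdiff j g).mul_left _)
  have hs1 : ∀ g ∈ S, Summable fun x : G =>
      ‖(α (x * g⁻¹) - Tα (x * g⁻¹)) - (α x - Tα x)‖ ^ p := by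
    intro g hg
    exact Summable.of_nonneg_of_le (fun x => Real.rpow_nonneg (norm_nonneg _) _)
      (fun x => hbd1 g x) ((hα g hg).mul_left _)
  have hs2 : ∀ (j : ℕ), ∀ g ∈ S, Summable fun x : G =>
      ‖(1 - tb j (x * g⁻¹)) * (Tα (x * g⁻¹) - Tα x)‖ ^ p := by
    intro j g hg
    exact Summable.of_nonneg_of_le (fun x => Real.rpow_nonneg (norm_nonneg _) _)
      (fun x => hbd2 j g x) ((hα g hg).mul_left _)
  -- E2, E3
  set E2 : ℕ → ℝ := fun j => ∑ g ∈ S, ∑' x : G,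
    ‖(1 - tb j (x * g⁻¹)) * (Tα (x * g⁻¹) - Tα x)‖ ^ p with hE2def
  set E3 : ℕ → ℝ := fun j => ∑ g ∈ S, ∑' x : G,
    ‖Tα x * (tb j x - tb j (x * g⁻¹))‖ ^ p with hE3def
  have hE2 : Tendsto E2 atTop (nhds 0) := by
    have hper : ∀ g ∈ S, Tendsto
        (fun j : ℕ => ∑' x : G, ‖(1 - tb j (x * g⁻¹)) * (Tα (x * g⁻¹) - Tα x)‖ ^ p)
        atTop (nhds 0) := by
      intro g hg
      have h0 : (0:ℝ) = ∑' _ : G, (0:ℝ) := by simp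
      rw [h0]
      apply tendsto_tsum_of_dominated_convergence
        (bound := fun x => 3 ^ p * ‖α (x * g⁻¹) - α x‖ ^ p) ((hα g hg).mul_left _)
      · intro x
        have h1 : Tendsto (fun j => (1:ℂ) - tb j (x * g⁻¹)) atTop (nhds 0) := by
          have := (tendsto_const_nhds (x := (1:ℂ)) (f := atTop (α := ℕ))).sub (htbpt (x * g⁻¹))
          simpa using this
        have h2 := ((h1.mul_const (Tα (x * g⁻¹) - Tα x)).norm).rpow_const (Or.inr hp0.le)
        simpa [Real.zero_rpow hp0.ne'] using h2
      · filter_upwards with j x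
        rw [Real.norm_of_nonneg (Real.rpow_nonneg (norm_nonneg _) _)]
        exact hbd2 j g x
    have h2 := tendsto_finset_sum S hper
    simpa [hE2def] using h2
  have hE3 : Tendsto E3 atTop (nhds 0) := by
    have hE3nn : ∀ j, 0 ≤ E3 j := fun j =>
      Finset.sum_nonneg fun g _ => tsum_nonneg fun x => Real.rpow_nonneg (norm_nonneg _) _
    have hbound : ∀ j, E3 j ≤ (2 * (M:ℝ)) ^ p * Db j := by
      intro j
      rw [hE3def, hDbdef, Finset.mul_sum]
      apply Finset.sum_le_sum
      intro g _
      rw [← tsum_mul_left]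
      exact Summable.tsum_le_tsum (fun x => hbd3 j g x) (hs3 j g) ((hbdiff j g).mul_left _)
    exact squeeze_zero hE3nn hbound (by simpa using hDb.const_mul ((2 * (M:ℝ)) ^ p))
  obtain ⟨k, hk2, hk3⟩ := ((hE2.eventually_lt_const hη).and (hE3.eventually_lt_const hη)).exists
  -- the approximant
  set β : G → ℂ := fun x => Tα x * tb k x with hβdef
  refine ⟨β, α 1 - β 1, ?_, ?_⟩
  · refine Summable.of_nonneg_of_le (fun x => Real.rpow_nonneg (norm_nonneg _) _)
      (fun x => ?_) ((hbsum k).mul_left ((2 * (M:ℝ)) ^ p))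
    calc ‖β x‖ ^ p ≤ ((2 * (M:ℝ)) * ‖b k x‖) ^ p := by
          apply Real.rpow_le_rpow (norm_nonneg _) _ hp0.le
          rw [hβdef]
          simp only [norm_mul]
          exact mul_le_mul (hTαbd x) (norm_truncC_le zero_le_one _) (norm_nonneg _)
            (by positivity)
      _ = (2 * (M:ℝ)) ^ p * ‖b k x‖ ^ p := Real.mul_rpow (by positivity) (norm_nonneg _)
  · -- the estimate
    set TOT : ℝ := ∑ g ∈ S, ∑' x : G, ‖(α (x * g⁻¹) - β (x * g⁻¹)) - (α x - β x)‖ ^ p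
      with hTOTdef
    have hkey : ∀ (g x : G),
        ‖(α (x * g⁻¹) - β (x * g⁻¹)) - (α x - β x)‖ ^ p ≤
          3 ^ p * (‖(α (x * g⁻¹) - Tα (x * g⁻¹)) - (α x - Tα x)‖ ^ p
            + ‖(1 - tb k (x * g⁻¹)) * (Tα (x * g⁻¹) - Tα x)‖ ^ p
            + ‖Tα x * (tb k x - tb k (x * g⁻¹))‖ ^ p) := by
      intro g x
      have hdecomp : (α (x * g⁻¹) - β (x * g⁻¹)) - (α x - β x)
          = ((α (x * g⁻¹) - Tα (x * g⁻¹)) - (α x - Tα x))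
            + (1 - tb k (x * g⁻¹)) * (Tα (x * g⁻¹) - Tα x)
            + Tα x * (tb k x - tb k (x * g⁻¹)) := by
        rw [hβdef]; ring
      refine rpow_le3 hp (norm_nonneg _) (norm_nonneg _) (norm_nonneg _) (norm_nonneg _) ?_
      rw [hdecomp]
      exact norm_add₃_le
    have hsL : ∀ g ∈ S, Summable fun x : G =>
        ‖(α (x * g⁻¹) - β (x * g⁻¹)) - (α x - β x)‖ ^ p := by
      intro g hg
      refine Summable.of_nonneg_of_le (fun x => Real.rpow_nonneg (norm_nonneg _) _)
        (fun x => hkey g x) ?_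
      exact (((hs1 g hg).add (hs2 k g hg)).add (hs3 k g)).mul_left _
    have hTOT : TOT ≤ 3 ^ p *
        ((∑ g ∈ S, ∑' x : G, ‖(α (x * g⁻¹) - Tα (x * g⁻¹)) - (α x - Tα x)‖ ^ p)
          + E2 k + E3 k) := by
      rw [hTOTdef, hE2def, hE3def]
      simp only
      have step : ∀ g ∈ S,
          (∑' x : G, ‖(α (x * g⁻¹) - β (x * g⁻¹)) - (α x - β x)‖ ^ p) ≤
            3 ^ p * ((∑' x : G, ‖(α (x * g⁻¹) - Tα (x * g⁻¹)) - (α x - Tα x)‖ ^ p)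
              + (∑' x : G, ‖(1 - tb k (x * g⁻¹)) * (Tα (x * g⁻¹) - Tα x)‖ ^ p)
              + (∑' x : G, ‖Tα x * (tb k x - tb k (x * g⁻¹))‖ ^ p)) := by
        intro g hg
        calc (∑' x : G, ‖(α (x * g⁻¹) - β (x * g⁻¹)) - (α x - β x)‖ ^ p)
            ≤ ∑' x : G, 3 ^ p * (‖(α (x * g⁻¹) - Tα (x * g⁻¹)) - (α x - Tα x)‖ ^ p
                + ‖(1 - tb k (x * g⁻¹)) * (Tα (x * g⁻¹) - Tα x)‖ ^ p
                + ‖Tα x * (tb k x - tb k (x * g⁻¹))‖ ^ p) :=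
              Summable.tsum_le_tsum (fun x => hkey g x) (hsL g hg)
                ((((hs1 g hg).add (hs2 k g hg)).add (hs3 k g)).mul_left _)
          _ = _ := by
              rw [tsum_mul_left, Summable.tsum_add ((hs1 g hg).add (hs2 k g hg)) (hs3 k g),
                Summable.tsum_add (hs1 g hg) (hs2 k g hg)]
      calc ∑ g ∈ S, ∑' x : G, ‖(α (x * g⁻¹) - β (x * g⁻¹)) - (α x - β x)‖ ^ p
          ≤ ∑ g ∈ S, 3 ^ p *
              ((∑' x : G, ‖(α (x * g⁻¹) - Tα (x * g⁻¹)) - (α x - Tα x)‖ ^ p)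
                + (∑' x : G, ‖(1 - tb k (x * g⁻¹)) * (Tα (x * g⁻¹) - Tα x)‖ ^ p)
                + (∑' x : G, ‖Tα x * (tb k x - tb k (x * g⁻¹))‖ ^ p)) :=
            Finset.sum_le_sum step
        _ = _ := by
            rw [← Finset.mul_sum, Finset.sum_add_distrib, Finset.sum_add_distrib]
    have hlt : TOT < ε ^ p := by
      have hsum3 : (∑ g ∈ S, ∑' x : G, ‖(α (x * g⁻¹) - Tα (x * g⁻¹)) - (α x - Tα x)‖ ^ p)
          + E2 k + E3 k < η + η + η := by
        have h1 := hME1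
        linarith
      have heq : 3 ^ p * (η + η + η) = 3 / 4 * ε ^ p := by
        rw [hηdef]
        field_simp
        ring
      calc TOT ≤ _ := hTOT
        _ < 3 ^ p * (η + η + η) := by exact mul_lt_mul_of_pos_left hsum3 h3p
        _ = 3 / 4 * ε ^ p := heq
        _ < ε ^ p := by linarith
    have hrw : (∑ g ∈ S, ∑' x : G,
        ‖α (x * g⁻¹) - β (x * g⁻¹) - (α 1 - β 1) - (α x - β x - (α 1 - β 1))‖ ^ p) = TOT := by
      rw [hTOTdef]
      refine Finset.sum_congr rfl fun g _ => tsum_congr fun x => ?_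
      rw [sub_sub_sub_cancel_right]
    rw [hrw, sub_self, norm_zero, Real.zero_rpow hp0.ne', add_zero]
    have hTOTnn : 0 ≤ TOT := by
      rw [hTOTdef]
      exact Finset.sum_nonneg fun g _ => tsum_nonneg fun x => Real.rpow_nonneg (norm_nonneg _) _
    have h1 : TOT ^ (1 / p) < (ε ^ p) ^ (1 / p) :=
      Real.rpow_lt_rpow hTOTnn hlt (by positivity)
    rw [one_div]
    rwa [one_div, Real.rpow_rpow_inv hε.le hp0.ne'] at h1
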